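/- arXiv:0710.2071 — 4 statements merged into one kernel-verified Lean document; each statement's English description precedes it below -/
import Mathlib

section
/- Let S be an isometry on a separable Hilbert space K, let (K_∞, {U_n}) be the direct limit of the system K →S→ K →S→ ···, and let S_∞ be the unitary on K_∞ determined by S_∞(U_{n+1} h) = U_n h. Define V_n := U_n(K) for n ≥ 0 and V_n := S_∞^{|n|}(V_0) for n < 0. Then ⋂_{n∈ℤ} V_n = {0} if and only if S is a pure isometry, i.e., ⋂_{k≥1} S^k(K) = {0}. -/
/-!
STATEMENT 2: With `V n := U n '' K` for `n ≥ 0` and `V n := S∞^{|n|} (V 0)` for `n < 0`,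
one has `⋂_{n ∈ ℤ} V n = {0}` if and only if `S` is a pure isometry,
i.e. `⋂_{k ≥ 1} S^k (K) = {0}`.
-/

open TopologicalSpace

theorem statement2
    {K Kinf : Type*}
    [NormedAddCommGroup K] [InnerProductSpace ℂ K] [CompleteSpace K] [SeparableSpace K]
    [NormedAddCommGroup Kinf] [InnerProductSpace ℂ Kinf] [CompleteSpace Kinf]
    [SeparableSpace Kinf]
    (S : K →ₗᵢ[ℂ] K) (U : ℕ → (K →ₗᵢ[ℂ] Kinf))
    (hU : ∀ (n : ℕ) (h : K), U (n + 1) (S h) = U n h)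
    (hdense : Dense (⋃ n : ℕ, Set.range (U n)))
    (Sinf : Kinf ≃ₗᵢ[ℂ] Kinf)
    (hSinf : ∀ (n : ℕ) (h : K), Sinf (U (n + 1) h) = U n h)
    (V : ℤ → Set Kinf)
    (hVnonneg : ∀ n : ℤ, 0 ≤ n → V n = Set.range (U n.toNat))
    (hVneg : ∀ n : ℤ, n < 0 → V n = (⇑Sinf)^[n.natAbs] '' Set.range (U 0)) :
    (⋂ n : ℤ, V n) = {0} ↔ (⋂ k : ℕ, ⋂ _ : 1 ≤ k, Set.range ((⇑S)^[k])) = {0} := by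
  have key1 : ∀ (k : ℕ) (h : K), U 0 h = U k ((⇑S)^[k] h) := by
    intro k
    induction k with
    | zero => intro h; rfl
    | succ k ih =>
      intro h
      rw [Function.iterate_succ_apply', hU, ← ih]
  have key2 : ∀ (k : ℕ) (h : K), (⇑Sinf)^[k] (U k h) = U 0 h := by
    intro k
    induction k with
    | zero => intro h; rfl
    | succ k ih =>
      intro h
      rw [Function.iterate_succ_apply, hSinf, ih]
  have key3 : ∀ (k : ℕ) (h : K), (⇑Sinf)^[k] (U 0 h) = U 0 ((⇑S)^[k] h) := by
    intro k h
    rw [key1 k h, key2]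
  have hsets : (⋂ k : ℕ, ⋂ _ : 1 ≤ k, Set.range ((⇑S)^[k]))
      = ⋂ k : ℕ, Set.range ((⇑S)^[k]) := by
    ext x
    simp only [Set.mem_iInter]
    constructor
    · intro h k
      rcases Nat.eq_zero_or_pos k with hk | hk
      · subst hk; exact ⟨x, rfl⟩
      · exact h k hk
    · intro h k _; exact h k
  have hmain : (⋂ n : ℤ, V n) = U 0 '' (⋂ k : ℕ, Set.range ((⇑S)^[k])) := by
    ext y
    simp only [Set.mem_iInter, Set.mem_image]
    constructor
    · intro hy
      have h0 := hy 0
      rw [hVnonneg 0 le_rfl] at h0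
      obtain ⟨x, hx⟩ := h0
      refine ⟨x, fun k => ?_, hx⟩
      rcases Nat.eq_zero_or_pos k with hk | hk
      · subst hk; exact ⟨x, rfl⟩
      · have hn : (-(k : ℤ)) < 0 := by omega
        have hyk := hy (-(k : ℤ))
        rw [hVneg _ hn] at hyk
        simp only [Int.natAbs_neg, Int.natAbs_natCast] at hyk
        obtain ⟨z, ⟨w, hw⟩, hz⟩ := hyk
        subst hw
        beta_reduce at hz
        rw [key3] at hz
        exact ⟨w, (U 0).injective (hz.trans hx.symm)⟩
    · rintro ⟨x, hxmem, hx⟩ n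
      rcases le_or_gt 0 n with hn | hn
      · rw [hVnonneg n hn]
        exact ⟨(⇑S)^[n.toNat] x, by rw [← key1, hx]⟩
      · rw [hVneg n hn]
        obtain ⟨w, hw⟩ := hxmem n.natAbs
        exact ⟨U 0 w, ⟨w, rfl⟩, by rw [key3, hw, hx]⟩
  rw [hmain, hsets]
  have hzero : (0 : K) ∈ ⋂ k : ℕ, Set.range ((⇑S)^[k]) :=
    Set.mem_iInter.mpr fun k => ⟨0, Function.iterate_fixed (map_zero S) k⟩
  constructor
  · intro h
    apply subset_antisymm
    · intro x hx
      have hx' : U 0 x ∈ U 0 '' (⋂ k : ℕ, Set.range ((⇑S)^[k])) := ⟨x, hx, rfl⟩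
      rw [h] at hx'
      have : U 0 x = 0 := hx'
      have := (U 0).injective (this.trans (map_zero (U 0)).symm)
      simpa using this
    · intro x hx
      rcases hx with rfl
      exact hzero
  · intro h
    rw [h, Set.image_singleton, map_zero]
end

section
/- Let Γ be a countable abelian group and α : Γ → Γ an injective group endomorphism. Let S be an isometry on a separable Hilbert space K, let (K_∞, {U_n}) be the direct limit of the system K →S→ K →S→ ···, and let S_∞ be the unitary on K_∞ determined by S_∞(U_{n+1} h) = U_n h. Suppose ρ is a unitary representation of Γ on K satisfying S ρ_γ = ρ_{α(γ)} S for all γ ∈ Γ. Then there exists a unitary representation π of Γ on K_∞ such that π_γ ∘ U_n = U_n ∘ ρ_{α^n(γ)} for all n ≥ 0 and γ ∈ Γ (so each subspace V_n := U_n(K), n ≥ 0, is invariant under π), and S_∞ π_γ = π_{α(γ)} S_∞ for all γ ∈ Γ. -/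
/-!
STATEMENT 3: If `ρ` is a unitary representation of a countable abelian group `Γ` on `K`
with `S ρ_γ = ρ_{α γ} S`, then there is a unitary representation `π` of `Γ` on the direct
limit `Kinf` with `π_γ ∘ U n = U n ∘ ρ_{α^n γ}` (so each `V n = U n '' K` is `π`-invariant)
and `S∞ π_γ = π_{α γ} S∞`.
-/

open TopologicalSpace

theorem statement3
    {Γ : Type*} [CommGroup Γ] [Countable Γ]
    (α : Γ →* Γ) (hα : Function.Injective α)
    {K Kinf : Type*}
    [NormedAddCommGroup K] [InnerProductSpace ℂ K] [CompleteSpace K] [SeparableSpace K]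
    [NormedAddCommGroup Kinf] [InnerProductSpace ℂ Kinf] [CompleteSpace Kinf]
    [SeparableSpace Kinf]
    (S : K →ₗᵢ[ℂ] K) (U : ℕ → (K →ₗᵢ[ℂ] Kinf))
    (hU : ∀ (n : ℕ) (h : K), U (n + 1) (S h) = U n h)
    (hdense : Dense (⋃ n : ℕ, Set.range (U n)))
    (Sinf : Kinf ≃ₗᵢ[ℂ] Kinf)
    (hSinf : ∀ (n : ℕ) (h : K), Sinf (U (n + 1) h) = U n h)
    (ρ : Γ →* (K ≃ₗᵢ[ℂ] K))
    (hρ : ∀ (γ : Γ) (h : K), S (ρ γ h) = ρ (α γ) (S h)) :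
    ∃ π : Γ →* (Kinf ≃ₗᵢ[ℂ] Kinf),
      (∀ (n : ℕ) (γ : Γ) (h : K), π γ (U n h) = U n (ρ ((⇑α)^[n] γ) h)) ∧
      (∀ (γ : Γ) (x : Kinf), Sinf (π γ x) = π (α γ) (Sinf x)) := by
  classical
  -- iterated compatibility of U with S
  have hUiter : ∀ (n k : ℕ) (h : K), U (n + k) ((⇑S)^[k] h) = U n h := by
    intro n k
    induction k with
    | zero => intro h; simp
    | succ k ih =>
      intro h
      have : U (n + k + 1) (S ((⇑S)^[k] h)) = U (n + k) ((⇑S)^[k] h) := hU (n + k) _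
      rw [Function.iterate_succ_apply', ← Nat.add_assoc]
      rw [this, ih]
  -- iterated intertwining of S and ρ
  have hSρ : ∀ (k : ℕ) (γ : Γ) (h : K),
      (⇑S)^[k] (ρ γ h) = ρ ((⇑α)^[k] γ) ((⇑S)^[k] h) := by
    intro k
    induction k with
    | zero => intro γ h; simp
    | succ k ih =>
      intro γ h
      rw [Function.iterate_succ_apply', ih, hρ, Function.iterate_succ_apply',
        Function.iterate_succ_apply']
  -- well-definedness at a common level, ordered version
  have hW' : ∀ (γ : Γ) (n m : ℕ) (h h' : K), n ≤ m → U n h = U m h' →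
      U n (ρ ((⇑α)^[n] γ) h) = U m (ρ ((⇑α)^[m] γ) h') := by
    intro γ n m h h' hnm heq
    obtain ⟨k, rfl⟩ := Nat.le.dest hnm
    have h1 : U (n + k) ((⇑S)^[k] h) = U (n + k) h' := by rw [hUiter n k h, heq]
    have h2 : (⇑S)^[k] h = h' := (U (n + k)).injective h1
    subst h2
    have h3 : (⇑α)^[n + k] γ = (⇑α)^[k] ((⇑α)^[n] γ) := by
      rw [Nat.add_comm, Function.iterate_add_apply]
    rw [h3, ← hSρ, hUiter]
  have hW : ∀ (γ : Γ) (n m : ℕ) (h h' : K), U n h = U m h' →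
      U n (ρ ((⇑α)^[n] γ) h) = U m (ρ ((⇑α)^[m] γ) h') := by
    intro γ n m h h' heq
    rcases le_total n m with hnm | hmn
    · exact hW' γ n m h h' hnm heq
    · exact (hW' γ m n h' h hmn heq.symm).symm
  -- lifting to a common level
  have hlift : ∀ (n N : ℕ) (h : K), n ≤ N → ∃ h', U N h' = U n h := by
    intro n N h hnN
    obtain ⟨k, rfl⟩ := Nat.le.dest hnN
    exact ⟨(⇑S)^[k] h, hUiter n k h⟩
  -- the dense union
  set Dset : Set Kinf := ⋃ n : ℕ, Set.range (U n) with hDset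
  have hmem : ∀ x : Kinf, x ∈ Dset ↔ ∃ p : ℕ × K, U p.1 p.2 = x := by
    intro x
    simp only [hDset, Set.mem_iUnion, Set.mem_range, Prod.exists]
  -- the raw function
  set g : Γ → Kinf → Kinf := fun γ x =>
    if hx : ∃ p : ℕ × K, U p.1 p.2 = x then
      U hx.choose.1 (ρ ((⇑α)^[hx.choose.1] γ) hx.choose.2)
    else 0 with hgdef
  have hg : ∀ (γ : Γ) (n : ℕ) (h : K), g γ (U n h) = U n (ρ ((⇑α)^[n] γ) h) := by
    intro γ n h
    have hx : ∃ p : ℕ × K, U p.1 p.2 = U n h := ⟨(n, h), rfl⟩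
    simp only [hgdef, dif_pos hx]
    exact hW γ _ n _ h hx.choose_spec
  -- Dset is a submodule
  have hadd : ∀ x ∈ Dset, ∀ y ∈ Dset, x + y ∈ Dset := by
    intro x hx y hy
    obtain ⟨⟨n, a⟩, rfl⟩ := (hmem x).mp hx
    obtain ⟨⟨m, b⟩, rfl⟩ := (hmem y).mp hy
    obtain ⟨a', ha'⟩ := hlift n (max n m) a (le_max_left n m)
    obtain ⟨b', hb'⟩ := hlift m (max n m) b (le_max_right n m)
    exact (hmem _).mpr ⟨(max n m, a' + b'), by simp [ha', hb']⟩
  set D : Submodule ℂ Kinf :=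
    { carrier := Dset
      add_mem' := fun hx hy => hadd _ hx _ hy
      zero_mem' := (hmem 0).mpr ⟨(0, 0), by simp⟩
      smul_mem' := by
        intro c x hx
        obtain ⟨⟨n, a⟩, rfl⟩ := (hmem x).mp hx
        exact (hmem _).mpr ⟨(n, c • a), by simp⟩ } with hDdef
  -- the linear isometry on D
  have hgadd : ∀ (γ : Γ) (x : D) (y : D), g γ ((x : Kinf) + y) = g γ x + g γ y := by
    rintro γ ⟨x, hx⟩ ⟨y, hy⟩
    obtain ⟨p, rfl⟩ := (hmem x).mp hx
    obtain ⟨n, a⟩ := p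
    obtain ⟨q, rfl⟩ := (hmem y).mp hy
    obtain ⟨m, b⟩ := q
    obtain ⟨a', ha'⟩ := hlift n (max n m) a (le_max_left n m)
    obtain ⟨b', hb'⟩ := hlift m (max n m) b (le_max_right n m)
    have hxy : U n a + U m b = U (max n m) (a' + b') := by simp [ha', hb']
    simp only [hxy, hg]
    rw [← hW γ _ n a' a ha', ← hW γ _ m b' b hb']
    simp
  have hgsmul : ∀ (γ : Γ) (c : ℂ) (x : D), g γ (c • (x : Kinf)) = c • g γ x := by
    rintro γ c ⟨x, hx⟩
    obtain ⟨p, rfl⟩ := (hmem x).mp hx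
    obtain ⟨n, a⟩ := p
    have : c • U n a = U n (c • a) := by simp
    simp only [this, hg]
    simp
  set fL : Γ → (D →ₗᵢ[ℂ] Kinf) := fun γ =>
    { toFun := fun x => g γ (x : Kinf)
      map_add' := fun x y => hgadd γ x y
      map_smul' := fun c x => hgsmul γ c x
      norm_map' := by
        rintro ⟨x, hx⟩
        obtain ⟨p, rfl⟩ := (hmem x).mp hx
        obtain ⟨n, a⟩ := p
        show ‖g γ (U n a)‖ = ‖(U n a : Kinf)‖
        rw [hg]
        simp } with hfLdef
  have hfLU : ∀ (γ : Γ) (n : ℕ) (h : K) (hx : U n h ∈ D),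
      fL γ ⟨U n h, hx⟩ = U n (ρ ((⇑α)^[n] γ) h) := by
    intro γ n h hx
    simp only [hfLdef]
    exact hg γ n h
  -- extension to Kinf
  set e : D →L[ℂ] Kinf := D.subtypeL with hedef
  have hde : DenseRange e := by
    have : Set.range e = Dset := Subtype.range_val
    rw [DenseRange, this]
    exact hdense
  have he : IsUniformInducing e := isUniformEmbedding_subtype_val.isUniformInducing
  set πc : Γ → (Kinf →L[ℂ] Kinf) := fun γ =>
    ContinuousLinearMap.extend (fL γ).toContinuousLinearMap e with hπcdef
  have hπcU : ∀ (γ : Γ) (n : ℕ) (h : K), πc γ (U n h) = U n (ρ ((⇑α)^[n] γ) h) := by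
    intro γ n h
    have hx : U n h ∈ D := (hmem _).mpr ⟨(n, h), rfl⟩
    have : πc γ (e ⟨U n h, hx⟩) = (fL γ).toContinuousLinearMap ⟨U n h, hx⟩ :=
      ContinuousLinearMap.extend_eq _ hde he _
    simpa [hfLU γ n h hx, hedef] using this
  -- extension principle
  have hext : ∀ (T T' : Kinf →L[ℂ] Kinf),
      (∀ (n : ℕ) (h : K), T (U n h) = T' (U n h)) → T = T' := by
    intro T T' hTT'
    ext x
    have : (⇑T : Kinf → Kinf) = ⇑T' := by
      refine Continuous.ext_on hdense T.continuous T'.continuous ?_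
      rintro x hx
      obtain ⟨⟨n, a⟩, rfl⟩ := (hmem x).mp hx
      exact hTT' n a
    exact congrFun this x
  -- isometry
  have hiso : ∀ (γ : Γ) (x : Kinf), ‖πc γ x‖ = ‖x‖ := by
    intro γ
    have : (fun x => ‖πc γ x‖) = fun x : Kinf => ‖x‖ := by
      refine Continuous.ext_on hdense ((πc γ).continuous.norm) continuous_norm ?_
      rintro x hx
      obtain ⟨⟨n, a⟩, rfl⟩ := (hmem x).mp hx
      simp [hπcU]
    exact fun x => congrFun this x
  -- multiplicativity
  have hcomp : ∀ (γ δ : Γ), πc (γ * δ) = (πc γ).comp (πc δ) := by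
    intro γ δ
    refine hext _ _ ?_
    intro n h
    simp only [ContinuousLinearMap.comp_apply, hπcU]
    rw [iterate_map_mul, map_mul]
    rfl
  have hone : πc 1 = ContinuousLinearMap.id ℂ Kinf := by
    refine hext _ _ ?_
    intro n h
    simp [hπcU, iterate_map_one]
  have hinvcomp : ∀ (γ : Γ) (x : Kinf), πc γ⁻¹ (πc γ x) = x := by
    intro γ x
    have : πc (γ⁻¹ * γ) = (πc γ⁻¹).comp (πc γ) := hcomp γ⁻¹ γ
    rw [inv_mul_cancel, hone] at this
    have h2 := ContinuousLinearMap.ext_iff.mp this x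
    simpa using h2.symm
  have hinvcomp' : ∀ (γ : Γ) (x : Kinf), πc γ (πc γ⁻¹ x) = x := by
    intro γ x
    have : πc (γ * γ⁻¹) = (πc γ).comp (πc γ⁻¹) := hcomp γ γ⁻¹
    rw [mul_inv_cancel, hone] at this
    have h2 := ContinuousLinearMap.ext_iff.mp this x
    simpa using h2.symm
  -- building the isometric equivalences
  set πe : Γ → (Kinf ≃ₗᵢ[ℂ] Kinf) := fun γ =>
    { toLinearEquiv :=
        (ContinuousLinearEquiv.equivOfInverse (πc γ) (πc γ⁻¹)
          (hinvcomp γ) (hinvcomp' γ)).toLinearEquiv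
      norm_map' := hiso γ } with hπedef
  have hπeapp : ∀ (γ : Γ) (x : Kinf), πe γ x = πc γ x := fun γ x => rfl
  set π : Γ →* (Kinf ≃ₗᵢ[ℂ] Kinf) := MonoidHom.mk' πe (by
    intro γ δ
    apply LinearIsometryEquiv.ext
    intro x
    have := ContinuousLinearMap.ext_iff.mp (hcomp γ δ) x
    simpa [hπeapp] using this) with hπdef
  refine ⟨π, ?_, ?_⟩
  · intro n γ h
    simpa [hπdef, hπeapp] using hπcU γ n h
  · intro γ x
    have hSU : ∀ (n : ℕ) (k : K), Sinf (U n k) = U n (S k) := by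
      intro n k
      rw [← hU n k, hSinf]
    have : (fun x => Sinf (π γ x)) = fun x => π (α γ) (Sinf x) := by
      refine Continuous.ext_on hdense
        (Sinf.continuous.comp (πc γ).continuous)
        (((πc (α γ)).continuous).comp Sinf.continuous) ?_
      rintro x hx
      obtain ⟨⟨n, a⟩, rfl⟩ := (hmem x).mp hx
      show Sinf (πc γ (U n a)) = πc (α γ) (Sinf (U n a))
      rw [hπcU, hSU, hSU, hπcU, hρ]
      congr 2
      rw [← Function.iterate_succ_apply, Function.iterate_succ_apply']
    exact congrFun this x
end

section
/- Let Γ be a countable abelian group and α : Γ → Γ an injective group endomorphism. Let S be a pure isometry on a separable Hilbert space K (i.e., ⋂_{k≥1} S^k(K) = {0}), let (K_∞, {U_n}) be the direct limit of the system K →S→ K →S→ ···, let S_∞ be the unitary on K_∞ determined by S_∞(U_{n+1} h) = U_n h, and suppose ρ is a unitary representation of Γ on K with S ρ_γ = ρ_{α(γ)} S for all γ ∈ Γ. Let π be the unitary representation of Γ on K_∞ with π_γ ∘ U_n = U_n ∘ ρ_{α^n(γ)}, and set δ := S_∞^{-1}. Then the subspaces V_n := U_n(K) for n ≥ 0 and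 V_n := S_∞^{|n|}(V_0) for n < 0 form a generalized multiresolution analysis relative to π and δ: (a) V_n ⊆ V_{n+1} for all n ∈ ℤ; (b) V_{n+1} = δ(V_n) for all n ∈ ℤ; (c) ⋃_{n≥0} V_n is dense in K_∞ and ⋂_{n≤0} V_n = {0}; (d) V_0 is invariant under π. -/
/-!
STATEMENT 4: If `S` is a pure isometry, then the subspaces `V n := U n '' K` (for `n ≥ 0`)
and `V n := S∞^{|n|} (V 0)` (for `n < 0`) form a generalized multiresolution analysis
relative to the representation `π` and the dilation `δ := S∞⁻¹`:
(a) `V n ⊆ V (n+1)`; (b) `V (n+1) = δ (V n)`; (c) `⋃_{n ≥ 0} V n` is dense and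
`⋂_{n ≤ 0} V n = {0}`; (d) `V 0` is invariant under `π`.
-/

open TopologicalSpace

theorem statement4
    {Γ : Type*} [CommGroup Γ] [Countable Γ]
    (α : Γ →* Γ) (hα : Function.Injective α)
    {K Kinf : Type*}
    [NormedAddCommGroup K] [InnerProductSpace ℂ K] [CompleteSpace K] [SeparableSpace K]
    [NormedAddCommGroup Kinf] [InnerProductSpace ℂ Kinf] [CompleteSpace Kinf]
    [SeparableSpace Kinf]
    (S : K →ₗᵢ[ℂ] K)
    (hpure : (⋂ k : ℕ, ⋂ _ : 1 ≤ k, Set.range ((⇑S)^[k])) = {0})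
    (U : ℕ → (K →ₗᵢ[ℂ] Kinf))
    (hU : ∀ (n : ℕ) (h : K), U (n + 1) (S h) = U n h)
    (hdense : Dense (⋃ n : ℕ, Set.range (U n)))
    (Sinf : Kinf ≃ₗᵢ[ℂ] Kinf)
    (hSinf : ∀ (n : ℕ) (h : K), Sinf (U (n + 1) h) = U n h)
    (ρ : Γ →* (K ≃ₗᵢ[ℂ] K))
    (hρ : ∀ (γ : Γ) (h : K), S (ρ γ h) = ρ (α γ) (S h))
    (π : Γ →* (Kinf ≃ₗᵢ[ℂ] Kinf))
    (hπ : ∀ (n : ℕ) (γ : Γ) (h : K), π γ (U n h) = U n (ρ ((⇑α)^[n] γ) h))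
    (V : ℤ → Set Kinf)
    (hVnonneg : ∀ n : ℤ, 0 ≤ n → V n = Set.range (U n.toNat))
    (hVneg : ∀ n : ℤ, n < 0 → V n = (⇑Sinf)^[n.natAbs] '' Set.range (U 0)) :
    (∀ n : ℤ, V n ⊆ V (n + 1)) ∧
    (∀ n : ℤ, V (n + 1) = Sinf.symm '' V n) ∧
    (Dense (⋃ n : ℕ, V n) ∧ (⋂ n : ℤ, ⋂ _ : n ≤ 0, V n) = {0}) ∧
    (∀ γ : Γ, π γ '' V 0 ⊆ V 0) := by
  -- basic facts
  have hSU0 : ∀ h : K, Sinf (U 0 h) = U 0 (S h) := fun h => by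
    rw [← hU 0 h, hSinf]
  have key : ∀ (k : ℕ) (h : K), (⇑Sinf)^[k] (U 0 h) = U 0 ((⇑S)^[k] h) := by
    intro k
    induction k with
    | zero => intro h; simp
    | succ k ih =>
      intro h
      rw [Function.iterate_succ_apply, hSU0, ih, ← Function.iterate_succ_apply]
  have himgK : ∀ k : ℕ, (⇑Sinf)^[k] '' Set.range (U 0) = ⇑(U 0) '' Set.range ((⇑S)^[k]) := by
    intro k
    ext x
    constructor
    · rintro ⟨_, ⟨h, rfl⟩, rfl⟩
      exact ⟨(⇑S)^[k] h, ⟨h, rfl⟩, (key k h).symm⟩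
    · rintro ⟨_, ⟨h, rfl⟩, rfl⟩
      exact ⟨U 0 h, ⟨h, rfl⟩, key k h⟩
  have hVle : ∀ n : ℤ, n ≤ 0 → V n = (⇑Sinf)^[n.natAbs] '' Set.range (U 0) := by
    intro n hn
    rcases hn.lt_or_eq with h | h
    · exact hVneg n h
    · subst h
      rw [hVnonneg 0 le_rfl]
      simp
  have hUsub : ∀ m : ℕ, Set.range (U m) ⊆ Set.range (U (m + 1)) := by
    rintro m _ ⟨h, rfl⟩
    exact ⟨S h, hU m h⟩
  have hSsub : Sinf '' Set.range (U 0) ⊆ Set.range (U 0) := by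
    rintro _ ⟨_, ⟨h, rfl⟩, rfl⟩
    rw [hSU0]
    exact ⟨S h, rfl⟩
  have himg : ∀ m : ℕ, Sinf '' Set.range (U (m + 1)) = Set.range (U m) := by
    intro m
    ext x
    constructor
    · rintro ⟨_, ⟨h, rfl⟩, rfl⟩
      rw [hSinf m h]
      exact ⟨h, rfl⟩
    · rintro ⟨h, rfl⟩
      exact ⟨U (m + 1) h, ⟨h, rfl⟩, hSinf m h⟩
  refine ⟨?_, ?_, ⟨?_, ?_⟩, ?_⟩
  · -- (a) nesting
    intro n
    rcases le_or_gt 0 n with hn | hn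
    · rw [hVnonneg n hn, hVnonneg (n + 1) (by omega)]
      have h1 : (n + 1).toNat = n.toNat + 1 := by omega
      rw [h1]
      exact hUsub n.toNat
    · rw [hVle n hn.le, hVle (n + 1) (by omega)]
      have hk : n.natAbs = (n + 1).natAbs + 1 := by omega
      rw [hk, Function.iterate_succ, Set.image_comp]
      exact Set.image_mono hSsub
  · -- (b) dilation
    intro n
    rcases le_or_gt 0 n with hn | hn
    · rw [hVnonneg n hn, hVnonneg (n + 1) (by omega), ← himg n.toNat]
      have h1 : (n + 1).toNat = n.toNat + 1 := by omega
      rw [h1]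
      simp [Set.image_image]
    · rw [hVle n hn.le, hVle (n + 1) (by omega)]
      have hk : n.natAbs = (n + 1).natAbs + 1 := by omega
      rw [hk, Function.iterate_succ', Set.image_comp]
      simp [Set.image_image]
  · -- (c) density
    have hUnion : (⋃ n : ℕ, V n) = ⋃ n : ℕ, Set.range (U n) := by
      apply Set.iUnion_congr
      intro n
      rw [hVnonneg n (Int.natCast_nonneg n)]
      simp
    exact hUnion ▸ hdense
  · -- (c) trivial intersection
    have hInter : (⋂ n : ℤ, ⋂ _ : n ≤ 0, V n) = ⋂ k : ℕ, (⇑Sinf)^[k] '' Set.range (U 0) := by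
      apply Set.Subset.antisymm
      · intro x hx
        simp only [Set.mem_iInter] at hx ⊢
        intro k
        have h1 := hx (-(k : ℤ)) (by omega)
        rw [hVle _ (by omega)] at h1
        simpa using h1
      · intro x hx
        simp only [Set.mem_iInter] at hx ⊢
        intro n hn
        rw [hVle n hn]
        exact hx n.natAbs
    rw [hInter]
    ext x
    simp only [Set.mem_iInter, Set.mem_singleton_iff]
    constructor
    · intro hx
      have hx' : ∀ k : ℕ, x ∈ ⇑(U 0) '' Set.range ((⇑S)^[k]) := fun k => (himgK k) ▸ hx k
      obtain ⟨y, -, rfl⟩ := hx' 0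
      have hy : ∀ k : ℕ, y ∈ Set.range ((⇑S)^[k]) := by
        intro k
        obtain ⟨z, hz, hze⟩ := hx' k
        have hzy : z = y := (U 0).injective hze
        exact hzy ▸ hz
      have hy0 : y ∈ ({0} : Set K) := by
        rw [← hpure]
        simp only [Set.mem_iInter]
        intro k _
        exact hy k
      simp only [Set.mem_singleton_iff] at hy0
      simp [hy0]
    · rintro rfl
      intro k
      exact ⟨0, ⟨0, by simp⟩, Function.iterate_fixed (by simp) k⟩
  · -- (d) invariance
    intro γ
    rw [hVnonneg 0 le_rfl, show Int.toNat 0 = 0 from rfl]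
    rintro _ ⟨_, ⟨h, rfl⟩, rfl⟩
    rw [hπ 0 γ h]
    exact ⟨_, rfl⟩
end

section
/- With Γ, Γ̂, λ, α, α*, N as in the standing assumptions, let m : Γ̂ → {0,1,...,c} be Borel and let H be a filter relative to m and α*. Then for every n ≥ 1, the generalized filter identity ∑_{ζ : α*^n(ζ)=ω} [H(α*^{n-1}(ζ)) H(α*^{n-2}(ζ)) ··· H(ζ)] · [H*(ζ) H*(α*(ζ)) ··· H*(α*^{n-1}(ζ))] = N^n · Σ(ω) holds for λ-almost all ω ∈ Γ̂, where Σ(ω) is the diagonal matrix with entries χ_{σ_i}(ω) and H* denotes the conjugate transpose. -/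
/-!
STATEMENT 10: The generalized filter identity: for every `n ≥ 1`,
`∑_{α*ⁿ(ζ)=ω} [H(α*^{n-1}(ζ)) ⋯ H(ζ)]·[H*(ζ) H*(α*(ζ)) ⋯ H*(α*^{n-1}(ζ))] = Nⁿ Σ(ω)`
for λ-almost all `ω`.
-/

open MeasureTheory Matrix Topology

private def fiberEquiv {X : Type*} (q : X → X) (n : ℕ) (ω : X) :
    {ζ : X // q^[n+1] ζ = ω} ≃ Σ η : {η : X // q^[n] η = ω}, {ζ : X // q ζ = η.1} where
  toFun ζ := ⟨⟨q ζ.1, by rw [← Function.iterate_succ_apply]; exact ζ.2⟩, ⟨ζ.1, rfl⟩⟩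
  invFun p := ⟨p.2.1, by rw [Function.iterate_succ_apply, p.2.2]; exact p.1.2⟩
  left_inv ζ := rfl
  right_inv p := by
    rcases p with ⟨⟨η, hη⟩, ⟨z, hz⟩⟩
    simp only at hz
    subst hz
    rfl

private lemma fiber_iter_finite {X : Type*} (q : X → X)
    (hfin : ∀ x : X, Finite {ζ : X // q ζ = x}) :
    ∀ (k : ℕ) (x : X), Finite {ζ : X // q^[k] ζ = x} := by
  intro k
  induction k with
  | zero =>
      intro x
      haveI : Subsingleton {ζ : X // q^[0] ζ = x} :=
        ⟨fun a b => Subtype.ext (a.2.trans b.2.symm)⟩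
      infer_instance
  | succ n ih =>
      intro x
      haveI := ih x
      haveI := hfin
      exact Finite.of_equiv _ (fiberEquiv q n x).symm

private lemma gen_filter_pointwise {X M : Type*} [Ring M] [Algebra ℂ M]
    (q : X → X) (H Hs D : X → M) (N : ℂ)
    (hfin : ∀ x : X, Finite {ζ : X // q ζ = x})
    (hDHs : ∀ η, D η * Hs η = Hs η)
    (ω : X)
    (hgood : ∀ (k : ℕ) (ζ : X), q^[k] ζ = ω →
      (∑ᶠ ζ' : {ζ' : X // q ζ' = ζ}, H ζ'.1 * Hs ζ'.1) = N • D ζ)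
    (n : ℕ) (hn : 1 ≤ n) :
    (∑ᶠ ζ : {ζ : X // q^[n] ζ = ω},
        (((List.range n).reverse.map fun k => H (q^[k] ζ.1)).prod) *
          (((List.range n).map fun k => Hs (q^[k] ζ.1)).prod))
      = (N ^ n) • D ω := by
  have hfinIter := fiber_iter_finite q hfin
  have hP : ∀ (n : ℕ) (ζ : X),
      (((List.range (n+1)).reverse.map fun k => H (q^[k] ζ)).prod)
        = (((List.range n).reverse.map fun k => H (q^[k] (q ζ))).prod) * H ζ := by
    intro n ζ
    rw [List.range_succ_eq_map, List.reverse_cons, List.map_append, List.prod_append,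
      ← List.map_reverse, List.map_map]
    simp [Function.comp_def, Function.iterate_succ_apply]
  have hQ : ∀ (n : ℕ) (ζ : X),
      (((List.range (n+1)).map fun k => Hs (q^[k] ζ)).prod)
        = Hs ζ * (((List.range n).map fun k => Hs (q^[k] (q ζ))).prod) := by
    intro n ζ
    rw [List.range_succ_eq_map, List.map_cons, List.prod_cons, List.map_map]
    simp [Function.comp_def, Function.iterate_succ_apply]
  have hDQ : ∀ (n : ℕ), 1 ≤ n → ∀ η : X,
      D η * (((List.range n).map fun k => Hs (q^[k] η)).prod)
        = (((List.range n).map fun k => Hs (q^[k] η)).prod) := by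
    intro n hn η
    obtain ⟨m, rfl⟩ := Nat.exists_eq_add_of_le hn
    rw [add_comm 1 m, hQ, ← mul_assoc, hDHs]
  induction n, hn using Nat.le_induction with
  | base =>
      letI : Fintype {ζ : X // q^[1] ζ = ω} := @Fintype.ofFinite _ (hfinIter _ _)
      letI : Fintype {ζ : X // q ζ = ω} := @Fintype.ofFinite _ (hfin _)
      let e : {ζ : X // q^[1] ζ = ω} ≃ {ζ : X // q ζ = ω} :=
        Equiv.subtypeEquivRight (fun ζ => by rw [Function.iterate_one])
      have hfe := hgood 0 ω rfl
      rw [finsum_eq_sum_of_fintype] at hfe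
      rw [finsum_eq_sum_of_fintype, pow_one, ← hfe]
      refine Fintype.sum_equiv e _ _ ?_
      intro ζ
      simp [List.range_succ, e, Equiv.subtypeEquivRight]
      rfl
  | succ n hn ih =>
      letI : Fintype {ζ : X // q^[n+1] ζ = ω} := @Fintype.ofFinite _ (hfinIter _ _)
      letI : Fintype {η : X // q^[n] η = ω} := @Fintype.ofFinite _ (hfinIter _ _)
      letI : ∀ η : {η : X // q^[n] η = ω}, Fintype {ζ : X // q ζ = η.1} :=
        fun η => @Fintype.ofFinite _ (hfin _)
      rw [finsum_eq_sum_of_fintype]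
      rw [← Equiv.sum_comp (fiberEquiv q n ω).symm]
      rw [← Finset.univ_sigma_univ, Finset.sum_sigma]
      have inner : ∀ η : {η : X // q^[n] η = ω},
          (∑ ζ : {ζ : X // q ζ = η.1},
            (((List.range (n+1)).reverse.map fun k => H (q^[k] ζ.1)).prod) *
              (((List.range (n+1)).map fun k => Hs (q^[k] ζ.1)).prod))
          = N • ((((List.range n).reverse.map fun k => H (q^[k] η.1)).prod) *
              (((List.range n).map fun k => Hs (q^[k] η.1)).prod)) := by
        intro η
        have hfe := hgood n η.1 η.2
        rw [finsum_eq_sum_of_fintype] at hfe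
        calc (∑ ζ : {ζ : X // q ζ = η.1},
            (((List.range (n+1)).reverse.map fun k => H (q^[k] ζ.1)).prod) *
              (((List.range (n+1)).map fun k => Hs (q^[k] ζ.1)).prod))
            = ∑ ζ : {ζ : X // q ζ = η.1},
              (((List.range n).reverse.map fun k => H (q^[k] η.1)).prod) *
                ((H ζ.1 * Hs ζ.1) *
                  (((List.range n).map fun k => Hs (q^[k] η.1)).prod)) := by
              refine Finset.sum_congr rfl fun ζ _ => ?_
              rw [hP, hQ, ζ.2]
              simp only [mul_assoc]
          _ = (((List.range n).reverse.map fun k => H (q^[k] η.1)).prod) *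
                ((∑ ζ : {ζ : X // q ζ = η.1}, H ζ.1 * Hs ζ.1) *
                  (((List.range n).map fun k => Hs (q^[k] η.1)).prod)) := by
              rw [← Finset.mul_sum, ← Finset.sum_mul]
          _ = N • ((((List.range n).reverse.map fun k => H (q^[k] η.1)).prod) *
                (((List.range n).map fun k => Hs (q^[k] η.1)).prod)) := by
              rw [hfe, smul_mul_assoc, hDQ n hn, mul_smul_comm]
      calc (∑ η : {η : X // q^[n] η = ω}, ∑ ζ : {ζ : X // q ζ = η.1},
              (((List.range (n+1)).reverse.map fun k =>
                H (q^[k] ((fiberEquiv q n ω).symm ⟨η, ζ⟩).1)).prod) *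
                (((List.range (n+1)).map fun k =>
                  Hs (q^[k] ((fiberEquiv q n ω).symm ⟨η, ζ⟩).1)).prod))
          = ∑ η : {η : X // q^[n] η = ω},
              N • ((((List.range n).reverse.map fun k => H (q^[k] η.1)).prod) *
                (((List.range n).map fun k => Hs (q^[k] η.1)).prod)) := by
            exact Finset.sum_congr rfl fun η _ => inner η
        _ = N • ∑ η : {η : X // q^[n] η = ω},
              ((((List.range n).reverse.map fun k => H (q^[k] η.1)).prod) *
                (((List.range n).map fun k => Hs (q^[k] η.1)).prod)) := by
            rw [Finset.smul_sum]
        _ = (N ^ (n+1)) • D ω := by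
            rw [← finsum_eq_sum_of_fintype, ih, smul_smul, ← pow_succ']

private lemma circle_exp_pow (x : ℝ) (n : ℕ) : Circle.exp x ^ n = Circle.exp (n * x) := by
  induction n with
  | zero => simp [Circle.exp_zero]
  | succ k ih =>
      rw [pow_succ, ih, ← Circle.exp_add]
      congr 1
      push_cast
      ring

private noncomputable def circleRootableNat : RootableBy Circle ℕ :=
  rootableByOfPowLeftSurj _ _ (fun {n} hn z =>
    ⟨Circle.exp (Complex.arg z / n), by
      have hn' : (n : ℝ) ≠ 0 := Nat.cast_ne_zero.mpr hn
      show Circle.exp (Complex.arg z / n) ^ n = z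
      rw [circle_exp_pow, mul_div_cancel₀ _ hn', Circle.exp_arg]⟩)

private noncomputable def circleDivisible : DivisibleBy (Additive Circle) ℤ := by
  letI : RootableBy Circle ℕ := circleRootableNat
  letI : RootableBy Circle ℤ := Group.rootableByIntOfRootableByNat Circle
  exact
  { div := fun a n => Additive.ofMul (RootableBy.root a.toMul n)
    div_zero := fun a => congrArg Additive.ofMul (RootableBy.root_zero a.toMul)
    div_cancel := fun {n} a hn => by
      show n • Additive.ofMul (RootableBy.root a.toMul n) = a
      rw [← ofMul_zpow]
      exact congrArg Additive.ofMul (RootableBy.root_cancel a.toMul hn) }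


theorem statement10
    {Γ : Type*} [CommGroup Γ] [Countable Γ] [TopologicalSpace Γ] [DiscreteTopology Γ]
    [MeasurableSpace (PontryaginDual Γ)] [BorelSpace (PontryaginDual Γ)]
    [CompactSpace (PontryaginDual Γ)]
    (lam : Measure (PontryaginDual Γ)) [lam.IsHaarMeasure] [IsProbabilityMeasure lam]
    (α : Γ →* Γ) (hα : Function.Injective α) (N : ℕ) (hN : 0 < N)
    (hidx : α.range.index = N)
    (q : PontryaginDual Γ → PontryaginDual Γ)
    (hq : ∀ (ω : PontryaginDual Γ) (γ : Γ), q ω γ = ω (α γ))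
    (hdense : Dense (⋃ n : ℕ, ⋃ _ : 1 ≤ n, {ω : PontryaginDual Γ | q^[n] ω = 1}))
    (c : ℕ) (m : PontryaginDual Γ → ℕ) (hm : Measurable m) (hmc : ∀ ω, m ω ≤ c)
    (H : PontryaginDual Γ → Matrix (Fin c) (Fin c) ℂ)
    (hHmeas : ∀ i j, Measurable fun ω => H ω i j)
    (hHsupp : ∀ (ω : PontryaginDual Γ) (i j : Fin c), m ω < (j : ℕ) + 1 → H ω i j = 0)
    (hHfilter : ∀ᵐ ω ∂lam,
      (∑ᶠ ζ : {ζ : PontryaginDual Γ // q ζ = ω}, H ζ.1 * (H ζ.1)ᴴ)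
        = (N : ℂ) • Matrix.diagonal
            (fun i : Fin c => if (i : ℕ) + 1 ≤ m ω then (1 : ℂ) else 0)) :
    ∀ n : ℕ, 1 ≤ n → ∀ᵐ ω ∂lam,
      (∑ᶠ ζ : {ζ : PontryaginDual Γ // q^[n] ζ = ω},
          (((List.range n).reverse.map fun k => H (q^[k] ζ.1)).prod) *
            (((List.range n).map fun k => (H (q^[k] ζ.1))ᴴ).prod))
        = ((N : ℂ) ^ n) • Matrix.diagonal
            (fun i : Fin c => if (i : ℕ) + 1 ≤ m ω then (1 : ℂ) else 0) := by
  -- q is a monoid hom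
  have happly : ∀ (x y : PontryaginDual Γ) (γ : Γ), (x * y) γ = x γ * y γ := fun _ _ _ => rfl
  have hinvapply : ∀ (x : PontryaginDual Γ) (γ : Γ), (x⁻¹) γ = (x γ)⁻¹ := fun _ _ => rfl
  have honeapply : ∀ (γ : Γ), (1 : PontryaginDual Γ) γ = 1 := fun _ => rfl
  have hqmul : ∀ x y, q (x * y) = q x * q y := by
    intro x y
    refine PontryaginDual.ext fun γ => ?_
    rw [hq, happly, happly, hq, hq]
  have hq1 : q 1 = 1 := by
    refine PontryaginDual.ext fun γ => ?_
    rw [hq, honeapply, honeapply]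
  have hqinv : ∀ x, q x⁻¹ = (q x)⁻¹ := by
    intro x
    refine PontryaginDual.ext fun γ => ?_
    rw [hq, hinvapply, hinvapply, hq]
  -- continuity
  have hqc : Continuous q := by
    have : q = ⇑(PontryaginDual.map (⟨α, continuous_of_discreteTopology⟩ :
        ContinuousMonoidHom Γ Γ)) := by
      funext ω
      refine PontryaginDual.ext fun γ => ?_
      rw [hq, PontryaginDual.map_apply]
      rfl
    rw [this]
    exact map_continuous _
  -- surjectivity
  have hqsurj : Function.Surjective q := by
    intro χ
    letI : DivisibleBy (Additive Circle) ℤ := circleDivisible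
    have hinj : Function.Injective ⇑(MonoidHom.toAdditive α) := fun a b hab => hα hab
    obtain ⟨h, hh⟩ := (Module.Baer.of_divisible
        (Additive Circle)).extension_property_addMonoidHom
      (MonoidHom.toAdditive α) hinj (MonoidHom.toAdditive χ.toMonoidHom)
    refine ⟨⟨MonoidHom.toAdditive.symm h, continuous_of_discreteTopology⟩, ?_⟩
    refine PontryaginDual.ext fun γ => ?_
    refine (hq _ γ).trans ?_
    exact congrArg Additive.toMul (DFunLike.congr_fun hh (Additive.ofMul γ))
  -- kernel is finite
  have hKfin : Finite {x : PontryaginDual Γ // q x = 1} := by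
    haveI : α.range.FiniteIndex := ⟨by rw [hidx]; exact hN.ne'⟩
    haveI : Finite (Γ ⧸ α.range) := α.range.finite_quotient_of_finiteIndex
    have hroots : Finite {z : Circle // z ^ N = 1} := by
      refine Finite.of_injective (fun z => (⟨(z.1 : ℂ), ?_⟩ :
          {w : ℂ // w ∈ Polynomial.nthRootsFinset N (1 : ℂ)})) ?_
      · rw [Polynomial.mem_nthRootsFinset hN]
        have h3 := congrArg (fun w : Circle => (w : ℂ)) z.2
        exact_mod_cast h3
      · intro a b hab
        have h4 := Subtype.ext_iff.mp hab
        dsimp at h4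
        exact Subtype.ext (Subtype.ext h4)
    have hcard : Nat.card (Γ ⧸ α.range) = N := hidx
    refine Finite.of_injective (fun x => (fun g : Γ ⧸ α.range =>
      (⟨QuotientGroup.lift α.range (x.1 : Γ →* Circle)
        (fun γ hγ => ?_) g, ?_⟩ : {z : Circle // z ^ N = 1}))) ?_
    · -- vanishing on range
      obtain ⟨δ, rfl⟩ := hγ
      have := DFunLike.congr_fun (x.2) δ
      rw [hq] at this
      exact this
    · -- N-th root
      rw [← map_pow]
      have : g ^ N = 1 := by rw [← hcard]; exact pow_card_eq_one'
      rw [this, _root_.map_one]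
    · intro a b hab
      refine Subtype.ext (PontryaginDual.ext fun γ => ?_)
      have := congrFun hab (QuotientGroup.mk γ)
      exact congrArg Subtype.val this
  -- fibers of q are finite
  have hfib : ∀ x : PontryaginDual Γ, Finite {ζ : PontryaginDual Γ // q ζ = x} := by
    intro x
    rcases isEmpty_or_nonempty {ζ : PontryaginDual Γ // q ζ = x} with h | h
    · infer_instance
    · obtain ⟨ζ₀⟩ := h
      refine Finite.of_injective (fun ζ => (⟨ζ.1 * ζ₀.1⁻¹, by
        rw [hqmul, hqinv, ζ.2, ζ₀.2, mul_inv_cancel]⟩ :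
          {y : PontryaginDual Γ // q y = 1})) ?_
      intro a b hab
      have := congrArg Subtype.val hab
      exact Subtype.ext (mul_right_cancel this)
  -- measure preservation
  have hqmeas : Measurable q := hqc.measurable
  have hmp : Measure.map q lam = lam := by
    haveI : (Measure.map q lam).IsHaarMeasure := by
      have h2 := Measure.isHaarMeasure_map_of_isFiniteMeasure lam
        (MonoidHom.mk' q hqmul) hqc hqsurj
      exact h2
    haveI : IsProbabilityMeasure (Measure.map q lam) :=
      Measure.isProbabilityMeasure_map hqmeas.aemeasurable
    exact Measure.isHaarMeasure_eq_of_isProbabilityMeasure _ _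
  -- regularity
  haveI : LocallyCompactSpace Γ := by
    refine ⟨fun x n hn => ⟨{x}, ?_, ?_, isCompact_singleton⟩⟩
    · simp [nhds_discrete]
    · simpa [Set.singleton_subset_iff] using mem_of_mem_nhds hn
  haveI : SecondCountableTopology (PontryaginDual Γ) :=
    (ContinuousMonoidHom.isInducing_toContinuousMap Γ Circle).secondCountableTopology
  -- image of null sets is null
  have himg : ∀ A : Set (PontryaginDual Γ), lam A = 0 → lam (q '' A) = 0 := by
    intro A hA
    have key : ∀ ε : ENNReal, 0 < ε → lam (q '' A) ≤ (Nat.card {x : PontryaginDual Γ // q x = 1}) * ε := by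
      intro ε hε
      obtain ⟨U, hAU, hUopen, hUε⟩ := Set.exists_isOpen_lt_of_lt A ε (by rw [hA]; exact hε)
      set S : Set (PontryaginDual Γ) := q ⁻¹' (q '' U) with hS
      have hSeq : S = ⋃ k : {x : PontryaginDual Γ // q x = 1},
          (fun y => y * (k.1)⁻¹) ⁻¹' U := by
        ext x
        simp only [Set.mem_preimage, Set.mem_iUnion, Set.mem_image, hS]
        constructor
        · rintro ⟨u, hu, huq⟩
          refine ⟨⟨u⁻¹ * x, ?_⟩, ?_⟩
          · rw [hqmul, hqinv, huq, inv_mul_cancel]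
          · simpa [mul_comm, mul_assoc] using hu
        · rintro ⟨k, hk⟩
          exact ⟨x * (k.1)⁻¹, hk, by rw [hqmul, hqinv, k.2, inv_one, mul_one]⟩
      have hSmeas : lam S ≤ (Nat.card {x : PontryaginDual Γ // q x = 1}) * ε := by
        rw [hSeq]
        haveI := hKfin
        refine le_trans (measure_iUnion_le _) ?_
        have : ∀ k : {x : PontryaginDual Γ // q x = 1},
            lam ((fun y => y * (k.1)⁻¹) ⁻¹' U) = lam U := by
          intro k
          have : (fun y : PontryaginDual Γ => y * (k.1)⁻¹) = (fun y => (k.1)⁻¹ * y) := by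
            funext y; exact mul_comm _ _
          rw [this]
          exact measure_preimage_mul lam _ U
        calc (∑' k : {x : PontryaginDual Γ // q x = 1}, lam ((fun y => y * (k.1)⁻¹) ⁻¹' U))
            = ∑' _k : {x : PontryaginDual Γ // q x = 1}, lam U := by
              exact tsum_congr this
          _ = (Nat.card {x : PontryaginDual Γ // q x = 1}) * lam U := by
              letI : Fintype {x : PontryaginDual Γ // q x = 1} := Fintype.ofFinite _
              rw [tsum_eq_sum (s := Finset.univ) (by intro b hb; exact absurd (Finset.mem_univ b) hb)]
              simp [Finset.sum_const, Nat.card_eq_fintype_card, mul_comm]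
          _ ≤ (Nat.card {x : PontryaginDual Γ // q x = 1}) * ε := by
              exact mul_le_mul_right hUε.le _
      -- q '' U is measurable
      have hSopen : IsOpen S := by
        rw [hSeq]
        haveI := hKfin
        exact isOpen_iUnion fun k => (Homeomorph.mulRight (k.1)⁻¹).continuous.isOpen_preimage _ hUopen
      have hVeq : q '' U = (q '' Sᶜ)ᶜ := by
        apply Set.eq_of_subset_of_subset
        · rintro _ ⟨u, hu, rfl⟩ ⟨x, hx, hxq⟩
          exact hx (by rw [hS]; exact Set.mem_preimage.mpr ⟨u, hu, hxq.symm⟩)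
        · intro ω hω
          obtain ⟨x, rfl⟩ := hqsurj ω
          by_contra hmem
          exact hω ⟨x, fun hxS => hmem (by rcases hxS with ⟨u, hu, huq⟩; exact ⟨u, hu, huq⟩), rfl⟩
      have hVmeas : MeasurableSet (q '' U) := by
        rw [hVeq]
        exact ((hSopen.isClosed_compl.isCompact.image hqc).isClosed.measurableSet).compl
      calc lam (q '' A) ≤ lam (q '' U) := measure_mono (Set.image_mono hAU)
        _ = lam S := by
            conv_lhs => rw [← hmp]
            rw [Measure.map_apply hqmeas hVmeas]
        _ ≤ _ := hSmeas
    -- conclude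
    refine le_antisymm ?_ zero_le
    refine ENNReal.le_of_forall_pos_le_add fun ε hε _ => ?_
    rw [zero_add]
    set c := (Nat.card {x : PontryaginDual Γ // q x = 1} : ENNReal)
    have hc : c ≠ ⊤ := ENNReal.natCast_ne_top _
    have hδ : (0 : ENNReal) < (ε : ENNReal) / (c + 1) := by
      refine ENNReal.div_pos ?_ (by simp [hc, ENNReal.add_ne_top])
      exact_mod_cast hε.ne'
    refine le_trans (key _ hδ) ?_
    calc c * ((ε : ENNReal) / (c + 1)) ≤ (c + 1) * ((ε : ENNReal) / (c + 1)) := by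
          exact mul_le_mul_left le_self_add _
      _ ≤ ε := ENNReal.mul_div_le
  -- the diagonal matrix absorbs the adjoint filters
  have hDHs : ∀ η, Matrix.diagonal (fun i : Fin c => if (i : ℕ) + 1 ≤ m η then (1:ℂ) else 0)
      * (H η)ᴴ = (H η)ᴴ := by
    intro η
    ext i j
    rw [Matrix.diagonal_mul]
    by_cases hle : (i : ℕ) + 1 ≤ m η
    · simp [hle]
    · have h0 : H η j i = 0 := hHsupp η j i (not_le.mp hle)
      simp [hle, Matrix.conjTranspose_apply, h0]
  -- the bad set and its iterated images
  set B := {ω : PontryaginDual Γ | ¬ ((∑ᶠ ζ : {ζ : PontryaginDual Γ // q ζ = ω},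
      H ζ.1 * (H ζ.1)ᴴ) = (N : ℂ) • Matrix.diagonal
        (fun i : Fin c => if (i : ℕ) + 1 ≤ m ω then (1 : ℂ) else 0))} with hBdef
  have hBad : lam B = 0 := ae_iff.mp hHfilter
  have hiterNull : ∀ k : ℕ, lam (q^[k] '' B) = 0 := by
    intro k
    induction k with
    | zero => simpa using hBad
    | succ k ih =>
        rw [Function.iterate_succ']
        rw [Set.image_comp]
        exact himg _ ih
  intro n hn
  have hGae : ∀ᵐ ω ∂lam, ∀ k : ℕ, ω ∉ q^[k] '' B := by
    rw [ae_iff]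
    have hset : {ω : PontryaginDual Γ | ¬ ∀ k : ℕ, ω ∉ q^[k] '' B}
        = ⋃ k : ℕ, q^[k] '' B := by
      ext ω; simp
    rw [hset]
    exact measure_iUnion_null hiterNull
  filter_upwards [hGae] with ω hω
  refine gen_filter_pointwise q H (fun ζ => (H ζ)ᴴ)
    (fun ω => Matrix.diagonal (fun i : Fin c => if (i : ℕ) + 1 ≤ m ω then (1 : ℂ) else 0))
    ((N : ℂ)) hfib hDHs ω ?_ n hn
  intro k ζ hk
  by_contra hne
  exact hω k ⟨ζ, hne, hk⟩
end
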